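/- Let Z > 0. There exists a constant C > 0, depending only on Z, such that for every twice continuously differentiable u : (0,Z) → ℝ: sup_{z ∈ (0,Z)} |u(z)| ≤ C ( ( ∫₀^Z ((z^{4/3}u'(z))')² dz )^{1/2} + ( ∫₀^Z (z^{2/3}u'(z))² dz )^{1/2} + ( ∫₀^Z u(z)² dz )^{1/2} ), where the inequality is understood in [0,∞] (in particular, if the right-hand side is finite then u is bounded). -/

import Mathlib

open MeasureTheory


private lemma ennnorm_sq_real' (a : ℝ) : ((‖a‖₊ : ENNReal)) ^ 2 = ENNReal.ofReal (a ^ 2) := by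
  rw [← Real.enorm_eq_ofReal (sq_nonneg a), ← ENNReal.coe_pow, ← nnnorm_pow] <;> rfl


/-- `L^∞` Hardy–Sobolev embedding for the weighted calculus, with the inequality
understood in `[0,∞]`. -/
theorem linfty_hardy_sobolev (Z : ℝ) (hZ : 0 < Z) :
    ∃ C > (0:ℝ), ∀ u : ℝ → ℝ, ContDiffOn ℝ 2 u (Set.Ioo 0 Z) →
      ∀ z ∈ Set.Ioo (0:ℝ) Z,
        (‖u z‖₊ : ENNReal) ≤ ENNReal.ofReal C *
          ((∫⁻ t in Set.Ioo (0:ℝ) Z,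
              (‖deriv (fun x => x ^ ((4:ℝ)/3) * deriv u x) t‖₊ : ENNReal) ^ 2) ^ ((1:ℝ)/2)
           + (∫⁻ t in Set.Ioo (0:ℝ) Z,
              (‖t ^ ((2:ℝ)/3) * deriv u t‖₊ : ENNReal) ^ 2) ^ ((1:ℝ)/2)
           + (∫⁻ t in Set.Ioo (0:ℝ) Z, (‖u t‖₊ : ENNReal) ^ 2) ^ ((1:ℝ)/2)) := by
  refine ⟨6 * Z ^ ((1:ℝ)/6) + (Real.sqrt Z)⁻¹ + 1, by positivity, ?_⟩
  intro u hu z hz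
  set g : ℝ → ℝ := fun x => x ^ ((4:ℝ)/3) * deriv u x with hgdef
  set IA := ∫⁻ t in Set.Ioo (0:ℝ) Z, (‖deriv g t‖₊ : ENNReal) ^ 2 with hIAdef
  set IB := ∫⁻ t in Set.Ioo (0:ℝ) Z, (‖t ^ ((2:ℝ)/3) * deriv u t‖₊ : ENNReal) ^ 2 with hIBdef
  set ID := ∫⁻ t in Set.Ioo (0:ℝ) Z, (‖u t‖₊ : ENNReal) ^ 2 with hIDdef
  -- trivial cases where the right-hand side is infinite
  have hCpos : (0:ℝ) < 6 * Z ^ ((1:ℝ)/6) + (Real.sqrt Z)⁻¹ + 1 := by positivity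
  have hCne : ENNReal.ofReal (6 * Z ^ ((1:ℝ)/6) + (Real.sqrt Z)⁻¹ + 1) ≠ 0 := by
    simp only [ne_eq, ENNReal.ofReal_eq_zero, not_le]; linarith
  by_cases hA : IA = ⊤
  · rw [hA, ENNReal.top_rpow_of_pos (by norm_num)]
    simp only [top_add, add_top, ENNReal.mul_top hCne, le_top]
  by_cases hB : IB = ⊤
  · rw [hB, ENNReal.top_rpow_of_pos (by norm_num)]
    simp only [top_add, add_top, ENNReal.mul_top hCne, le_top]
  by_cases hD : ID = ⊤
  · rw [hD, ENNReal.top_rpow_of_pos (by norm_num)]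
    simp only [top_add, add_top, ENNReal.mul_top hCne, le_top]
  -- real-valued norms
  set Ar := (IA ^ ((1:ℝ)/2)).toReal with hArdef
  set Br := (IB ^ ((1:ℝ)/2)).toReal with hBrdef
  set Dr := (ID ^ ((1:ℝ)/2)).toReal with hDrdef
  have hAne : IA ^ ((1:ℝ)/2) ≠ ⊤ := ENNReal.rpow_ne_top_of_nonneg (by norm_num) hA
  have hBne : IB ^ ((1:ℝ)/2) ≠ ⊤ := ENNReal.rpow_ne_top_of_nonneg (by norm_num) hB
  have hDne : ID ^ ((1:ℝ)/2) ≠ ⊤ := ENNReal.rpow_ne_top_of_nonneg (by norm_num) hD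
  have hAr : ENNReal.ofReal Ar = IA ^ ((1:ℝ)/2) := ENNReal.ofReal_toReal hAne
  have hBr : ENNReal.ofReal Br = IB ^ ((1:ℝ)/2) := ENNReal.ofReal_toReal hBne
  have hDr : ENNReal.ofReal Dr = ID ^ ((1:ℝ)/2) := ENNReal.ofReal_toReal hDne
  have hAr0 : 0 ≤ Ar := ENNReal.toReal_nonneg
  have hBr0 : 0 ≤ Br := ENNReal.toReal_nonneg
  have hDr0 : 0 ≤ Dr := ENNReal.toReal_nonneg
  -- regularity
  have hu1 : ContDiffOn ℝ 1 (deriv u) (Set.Ioo 0 Z) := by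
    exact hu.deriv_of_isOpen isOpen_Ioo (by norm_num)
  have hgC1 : ContDiffOn ℝ 1 g (Set.Ioo 0 Z) := by
    refine ContDiffOn.mul ?_ hu1
    intro x hx
    exact (Real.contDiffAt_rpow_const_of_ne (ne_of_gt hx.1)).contDiffWithinAt
  have hgdiff : DifferentiableOn ℝ g (Set.Ioo 0 Z) := hgC1.differentiableOn (by norm_num)
  have hg'cont : ContinuousOn (deriv g) (Set.Ioo 0 Z) :=
    hgC1.continuousOn_deriv_of_isOpen isOpen_Ioo le_rfl
  have hudiff : DifferentiableOn ℝ u (Set.Ioo 0 Z) := hu.differentiableOn (by norm_num)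
  have hu'cont : ContinuousOn (deriv u) (Set.Ioo 0 Z) := hu1.continuousOn
  have hmeasg' : Measurable (fun x => (‖deriv g x‖₊ : ENNReal)) := (measurable_deriv g).enorm
  have hcast2 : ∀ c : ENNReal, c ^ (2:ℝ) = c ^ (2:ℕ) := fun c => by
    rw [← ENNReal.rpow_natCast]; norm_num
  have holder : ∀ s t : ℝ, 0 < s → s ≤ t → t < Z →
      (∫⁻ x in Set.Ioc s t, (‖deriv g x‖₊ : ENNReal))
        ≤ IA ^ ((1:ℝ)/2) * (ENNReal.ofReal (t - s)) ^ ((1:ℝ)/2) := by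
    intro s t hs hst htZ
    have h2 := ENNReal.lintegral_mul_le_Lp_mul_Lq (volume.restrict (Set.Ioc s t))
      (p := 2) (q := 2) ⟨by norm_num, by norm_num, by norm_num⟩ hmeasg'.aemeasurable
      (aemeasurable_const (b := (1 : ENNReal)))
    simp only [Pi.mul_apply, mul_one, ENNReal.one_rpow, lintegral_const,
      Measure.restrict_apply_univ, one_mul] at h2
    refine h2.trans (mul_le_mul' (ENNReal.rpow_le_rpow ?_ (by norm_num))
      (le_of_eq (by rw [Real.volume_Ioc])))
    simp_rw [hcast2]
    refine lintegral_mono_set ?_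
    exact fun x hx => ⟨lt_of_lt_of_le hs hx.1.le, lt_of_le_of_lt hx.2 htZ⟩
  -- existence of points where g is small
  have hsmallg : ∀ ε : ℝ, 0 < ε → ∀ δ : ℝ, 0 < δ → δ ≤ Z →
      ∃ s ∈ Set.Ioo (0:ℝ) δ, |g s| < ε := by
    intro ε hε δ hδ hδZ
    by_contra hcon
    push_neg at hcon
    have hpt : ∀ x ∈ Set.Ioo (0:ℝ) δ,
        ENNReal.ofReal (ε ^ 2 * x ^ (-(4:ℝ)/3)) ≤ (‖x ^ ((2:ℝ)/3) * deriv u x‖₊ : ENNReal) ^ 2 := by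
      intro x hx
      have hx0 : (0:ℝ) < x := hx.1
      rw [ennnorm_sq_real']
      apply ENNReal.ofReal_le_ofReal
      have key : x ^ ((2:ℝ)/3) * deriv u x = x ^ (-(2:ℝ)/3) * g x := by
        rw [hgdef]
        rw [← mul_assoc, ← Real.rpow_add hx0]
        norm_num
      rw [key, mul_pow, ← Real.rpow_natCast (x ^ (-(2:ℝ)/3)) 2, ← Real.rpow_mul hx0.le]
      have hexp : (-(2:ℝ)/3) * (2:ℕ) = -(4:ℝ)/3 := by norm_num
      rw [hexp]
      have hgx : ε ^ 2 ≤ g x ^ 2 := by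
        have h1 : ε ≤ |g x| := hcon x hx
        calc ε ^ 2 ≤ |g x| ^ 2 := pow_le_pow_left₀ hε.le h1 2
          _ = g x ^ 2 := sq_abs _
      have hxp : (0:ℝ) ≤ x ^ (-(4:ℝ)/3) := Real.rpow_nonneg hx0.le _
      calc ε ^ 2 * x ^ (-(4:ℝ)/3) = x ^ (-(4:ℝ)/3) * ε ^ 2 := by ring
        _ ≤ x ^ (-(4:ℝ)/3) * g x ^ 2 := mul_le_mul_of_nonneg_left hgx hxp
    have hint : (∫⁻ x in Set.Ioo (0:ℝ) δ, ENNReal.ofReal (ε ^ 2 * x ^ (-(4:ℝ)/3))) ≤ IB := by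
      refine le_trans
        (lintegral_mono_ae ((ae_restrict_iff' measurableSet_Ioo).2 (ae_of_all _ hpt))) ?_
      exact lintegral_mono_set (Set.Ioo_subset_Ioo_right hδZ)
    have hfin : (∫⁻ x in Set.Ioo (0:ℝ) δ, ENNReal.ofReal (ε ^ 2 * x ^ (-(4:ℝ)/3))) < ⊤ :=
      lt_of_le_of_lt hint (lt_top_iff_ne_top.2 hB)
    have hmeas4 : Measurable (fun x : ℝ => x ^ (-(4:ℝ)/3)) := measurable_id.pow measurable_const
    have hsplit : (∫⁻ x in Set.Ioo (0:ℝ) δ, ENNReal.ofReal (ε ^ 2 * x ^ (-(4:ℝ)/3)))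
        = ENNReal.ofReal (ε ^ 2) * ∫⁻ x in Set.Ioo (0:ℝ) δ, ENNReal.ofReal (x ^ (-(4:ℝ)/3)) := by
      rw [← lintegral_const_mul _ hmeas4.ennreal_ofReal]
      congr 1
      ext x
      exact ENNReal.ofReal_mul (sq_nonneg ε)
    have hfin2 : (∫⁻ x in Set.Ioo (0:ℝ) δ, ENNReal.ofReal (x ^ (-(4:ℝ)/3))) < ⊤ := by
      by_contra htop
      rw [not_lt, top_le_iff] at htop
      rw [hsplit, htop, ENNReal.mul_top (by simp [ENNReal.ofReal_eq_zero]; positivity)] at hfin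
      exact (lt_irrefl _ hfin).elim
    have hiOn : IntegrableOn (fun x : ℝ => x ^ (-(4:ℝ)/3)) (Set.Ioo 0 δ) := by
      constructor
      · exact hmeas4.aestronglyMeasurable
      · rw [hasFiniteIntegral_iff_norm]
        have : (∫⁻ x in Set.Ioo (0:ℝ) δ, ENNReal.ofReal ‖x ^ (-(4:ℝ)/3)‖)
            = ∫⁻ x in Set.Ioo (0:ℝ) δ, ENNReal.ofReal (x ^ (-(4:ℝ)/3)) := by
          refine setLIntegral_congr_fun measurableSet_Ioo (fun x hx => ?_)
          rw [Real.norm_eq_abs, abs_of_nonneg (Real.rpow_nonneg hx.1.le _)]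
        rw [this]
        exact hfin2
    have := (intervalIntegral.integrableOn_Ioo_rpow_iff hδ).1 hiOn
    norm_num at this
  -- pointwise bound on g
  have hgbound : ∀ t ∈ Set.Ioo (0:ℝ) Z, |g t| ≤ Ar * t ^ ((1:ℝ)/2) := by
    intro t ht
    refine le_of_forall_pos_le_add fun ε hε => ?_
    obtain ⟨s, hs, hgs⟩ := hsmallg ε hε t ht.1 ht.2.le
    have hst : s ≤ t := hs.2.le
    have hsub : Set.Icc s t ⊆ Set.Ioo (0:ℝ) Z :=
      fun x hx => ⟨lt_of_lt_of_le hs.1 hx.1, lt_of_le_of_lt hx.2 ht.2⟩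
    have hftc : g t - g s = ∫ x in s..t, deriv g x := by
      refine (intervalIntegral.integral_eq_sub_of_hasDerivAt ?_ ?_).symm
      · intro x hx
        rw [Set.uIcc_of_le hst] at hx
        exact (hgdiff.differentiableAt (isOpen_Ioo.mem_nhds (hsub hx))).hasDerivAt
      · refine (hg'cont.mono ?_).intervalIntegrable
        rw [Set.uIcc_of_le hst]; exact hsub
    have hb1 : |∫ x in s..t, deriv g x| ≤ ∫ x in s..t, ‖deriv g x‖ := by
      rw [← Real.norm_eq_abs]
      exact intervalIntegral.norm_integral_le_integral_norm hst
    have hb2 : (∫ x in s..t, ‖deriv g x‖)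
        = (∫⁻ x in Set.Ioc s t, (‖deriv g x‖₊ : ENNReal)).toReal := by
      rw [intervalIntegral.integral_of_le hst,
        integral_norm_eq_lintegral_enorm ((measurable_deriv g).aestronglyMeasurable)]; rfl
    have hfin' : IA ^ ((1:ℝ)/2) * (ENNReal.ofReal (t - s)) ^ ((1:ℝ)/2) ≠ ⊤ :=
      ENNReal.mul_ne_top hAne (ENNReal.rpow_ne_top_of_nonneg (by norm_num) ENNReal.ofReal_ne_top)
    have hb4 : (∫⁻ x in Set.Ioc s t, (‖deriv g x‖₊ : ENNReal)).toReal
        ≤ Ar * (t - s) ^ ((1:ℝ)/2) := by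
      have hArr : Ar = IA.toReal ^ ((1:ℝ)/2) := (ENNReal.toReal_rpow IA ((1:ℝ)/2)).symm
      have h := ENNReal.toReal_mono hfin' (holder s t hs.1 hst ht.2)
      rwa [ENNReal.toReal_mul, ← ENNReal.toReal_rpow, ← ENNReal.toReal_rpow,
        ENNReal.toReal_ofReal (by linarith), ← hArr] at h
    have hmono : (t - s) ^ ((1:ℝ)/2) ≤ t ^ ((1:ℝ)/2) :=
      Real.rpow_le_rpow (by linarith) (by linarith [hs.1]) (by norm_num)
    have habs : |g t| ≤ |g s| + |g t - g s| := by
      have := abs_sub_abs_le_abs_sub (g t) (g s)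
      linarith [abs_nonneg (g s)]
    have : |g t - g s| ≤ Ar * t ^ ((1:ℝ)/2) := by
      rw [hftc]
      calc |∫ x in s..t, deriv g x| ≤ ∫ x in s..t, ‖deriv g x‖ := hb1
        _ = (∫⁻ x in Set.Ioc s t, (‖deriv g x‖₊ : ENNReal)).toReal := hb2
        _ ≤ Ar * (t - s) ^ ((1:ℝ)/2) := hb4
        _ ≤ Ar * t ^ ((1:ℝ)/2) := mul_le_mul_of_nonneg_left hmono hAr0
    linarith
  -- pointwise bound on deriv u
  have hu'bound : ∀ t ∈ Set.Ioo (0:ℝ) Z, |deriv u t| ≤ Ar * t ^ (-(5:ℝ)/6) := by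
    intro t ht
    have ht0 : (0:ℝ) < t := ht.1
    have htp : (0:ℝ) < t ^ ((4:ℝ)/3) := Real.rpow_pos_of_pos ht0 _
    have h1 : |deriv u t| * t ^ ((4:ℝ)/3) ≤ Ar * t ^ ((1:ℝ)/2) := by
      have : |deriv u t| * t ^ ((4:ℝ)/3) = |g t| := by
        rw [hgdef]
        rw [abs_mul, abs_of_pos htp]; ring
      rw [this]; exact hgbound t ht
    have h2 : |deriv u t| ≤ Ar * t ^ ((1:ℝ)/2) / t ^ ((4:ℝ)/3) :=
      (le_div_iff₀ htp).2 h1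
    calc |deriv u t| ≤ Ar * t ^ ((1:ℝ)/2) / t ^ ((4:ℝ)/3) := h2
      _ = Ar * (t ^ ((1:ℝ)/2) / t ^ ((4:ℝ)/3)) := by ring
      _ = Ar * t ^ (-(5:ℝ)/6) := by
          rw [← Real.rpow_sub ht0]; norm_num
  -- oscillation bound
  have hosc : ∀ w zz : ℝ, w ∈ Set.Ioo (0:ℝ) Z → zz ∈ Set.Ioo (0:ℝ) Z → w ≤ zz →
      |u zz - u w| ≤ 6 * Ar * Z ^ ((1:ℝ)/6) := by
    intro w zz hw hzz hwz
    have hsub : Set.Icc w zz ⊆ Set.Ioo (0:ℝ) Z :=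
      fun x hx => ⟨lt_of_lt_of_le hw.1 hx.1, lt_of_le_of_lt hx.2 hzz.2⟩
    have hftc : u zz - u w = ∫ x in w..zz, deriv u x := by
      refine (intervalIntegral.integral_eq_sub_of_hasDerivAt ?_ ?_).symm
      · intro x hx
        rw [Set.uIcc_of_le hwz] at hx
        exact (hudiff.differentiableAt (isOpen_Ioo.mem_nhds (hsub hx))).hasDerivAt
      · refine (hu'cont.mono ?_).intervalIntegrable
        rw [Set.uIcc_of_le hwz]; exact hsub
    have hcont2 : ContinuousOn (fun x : ℝ => Ar * x ^ (-(5:ℝ)/6)) (Set.Icc w zz) := by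
      refine continuousOn_const.mul ?_
      intro x hx
      exact (Real.continuousAt_rpow_const x _ (Or.inl (ne_of_gt (hsub hx).1))).continuousWithinAt
    have hii1 : IntervalIntegrable (fun x => |deriv u x|) volume w zz := by
      refine ContinuousOn.intervalIntegrable ?_
      rw [Set.uIcc_of_le hwz]
      exact (hu'cont.mono hsub).abs
    have hii2 : IntervalIntegrable (fun x : ℝ => Ar * x ^ (-(5:ℝ)/6)) volume w zz := by
      refine ContinuousOn.intervalIntegrable ?_
      rw [Set.uIcc_of_le hwz]
      exact hcont2
    have hmono : ∀ x ∈ Set.Icc w zz, |deriv u x| ≤ Ar * x ^ (-(5:ℝ)/6) :=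
      fun x hx => hu'bound x (hsub hx)
    have hint : |u zz - u w| ≤ ∫ x in w..zz, Ar * x ^ (-(5:ℝ)/6) := by
      rw [hftc]
      calc |∫ x in w..zz, deriv u x| ≤ ∫ x in w..zz, |deriv u x| := by
            rw [← Real.norm_eq_abs]
            refine (intervalIntegral.norm_integral_le_integral_norm hwz).trans_eq ?_
            simp [Real.norm_eq_abs]
        _ ≤ ∫ x in w..zz, Ar * x ^ (-(5:ℝ)/6) :=
            intervalIntegral.integral_mono_on hwz hii1 hii2 hmono
    have hval : (∫ x in w..zz, Ar * x ^ (-(5:ℝ)/6))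
        = Ar * ((zz ^ ((1:ℝ)/6) - w ^ ((1:ℝ)/6)) / ((1:ℝ)/6)) := by
      rw [intervalIntegral.integral_const_mul]
      congr 1
      rw [integral_rpow (Or.inr ⟨by norm_num, ?_⟩)]
      · norm_num
      · rw [Set.uIcc_of_le hwz]
        intro h0
        exact absurd h0.1 (not_le.2 hw.1)
    have hZ6 : zz ^ ((1:ℝ)/6) ≤ Z ^ ((1:ℝ)/6) :=
      Real.rpow_le_rpow hzz.1.le hzz.2.le (by norm_num)
    have hw6 : (0:ℝ) ≤ w ^ ((1:ℝ)/6) := Real.rpow_nonneg hw.1.le _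
    have h6 : Ar * ((zz ^ ((1:ℝ)/6) - w ^ ((1:ℝ)/6)) / ((1:ℝ)/6))
        ≤ 6 * Ar * Z ^ ((1:ℝ)/6) := by
      have hArz : Ar * zz ^ ((1:ℝ)/6) ≤ Ar * Z ^ ((1:ℝ)/6) :=
        mul_le_mul_of_nonneg_left hZ6 hAr0
      have hArw : 0 ≤ Ar * w ^ ((1:ℝ)/6) := mul_nonneg hAr0 hw6
      nlinarith
    rw [hval] at hint
    linarith
  -- a point where u is small
  have hsmallu : ∀ ε : ℝ, 0 < ε → ∃ w ∈ Set.Ioo (0:ℝ) Z,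
      |u w| ≤ Dr * (Real.sqrt Z)⁻¹ + ε := by
    intro ε hε
    by_contra hcon
    push_neg at hcon
    set M := Dr * (Real.sqrt Z)⁻¹ + ε with hM
    clear_value M
    have hM0 : (0:ℝ) ≤ M := by
      rw [hM]
      have : (0:ℝ) ≤ Dr * (Real.sqrt Z)⁻¹ := by positivity
      linarith
    have hpt : ∀ x ∈ Set.Ioo (0:ℝ) Z, ENNReal.ofReal (M ^ 2) ≤ (‖u x‖₊ : ENNReal) ^ 2 := by
      intro x hx
      rw [ennnorm_sq_real']
      apply ENNReal.ofReal_le_ofReal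
      calc M ^ 2 ≤ |u x| ^ 2 := pow_le_pow_left₀ hM0 (hcon x hx).le 2
        _ = u x ^ 2 := sq_abs _
    have hlow : ENNReal.ofReal (M ^ 2) * ENNReal.ofReal Z ≤ ID := by
      have h1 : (∫⁻ _x in Set.Ioo (0:ℝ) Z, ENNReal.ofReal (M ^ 2)) ≤ ID :=
        lintegral_mono_ae ((ae_restrict_iff' measurableSet_Ioo).2 (ae_of_all _ hpt))
      rwa [setLIntegral_const, Real.volume_Ioo, sub_zero] at h1
    have hIDval : ID = ENNReal.ofReal (Dr ^ 2) := by
      have h2 : (ID ^ ((1:ℝ)/2)) ^ (2:ℕ) = ID := by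
        rw [← ENNReal.rpow_natCast (ID ^ ((1:ℝ)/2)) 2, ← ENNReal.rpow_mul]
        norm_num
      rw [← h2, ← hDr, ← ENNReal.ofReal_pow hDr0]
    rw [hIDval, ← ENNReal.ofReal_mul (by positivity)] at hlow
    have hreal : M ^ 2 * Z ≤ Dr ^ 2 :=
      (ENNReal.ofReal_le_ofReal_iff (by positivity)).1 hlow
    have hZs : Real.sqrt Z ^ 2 = Z := Real.sq_sqrt hZ.le
    have hinv : ((Real.sqrt Z)⁻¹) ^ 2 * Z = 1 := by
      rw [inv_pow, hZs, inv_mul_cancel₀ hZ.ne']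
    have hexp : M ^ 2 * Z = Dr ^ 2 + (2 * Dr * (Real.sqrt Z)⁻¹ * ε) * Z + ε ^ 2 * Z := by
      have h3 : M ^ 2 * Z
          = Dr ^ 2 * (((Real.sqrt Z)⁻¹) ^ 2 * Z)
            + (2 * Dr * (Real.sqrt Z)⁻¹ * ε) * Z + ε ^ 2 * Z := by
        rw [hM]; ring
      rw [h3, hinv]; ring
    have hsqnn : (0:ℝ) ≤ (Real.sqrt Z)⁻¹ := by positivity
    have ha : (0:ℝ) ≤ 2 * Dr * (Real.sqrt Z)⁻¹ * ε * Z :=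
      mul_nonneg (mul_nonneg (mul_nonneg (mul_nonneg (by norm_num) hDr0) hsqnn) hε.le) hZ.le
    have hb : (0:ℝ) < ε ^ 2 * Z := mul_pos (pow_pos hε 2) hZ
    have hDZ : Dr ^ 2 * (((Real.sqrt Z)⁻¹) ^ 2 * Z) = Dr ^ 2 := by rw [hinv, mul_one]
    nlinarith [hreal, hexp, ha, hb, hDZ]
  -- final real bound
  have hfinal : |u z| ≤ 6 * Ar * Z ^ ((1:ℝ)/6) + Dr * (Real.sqrt Z)⁻¹ := by
    refine le_of_forall_pos_le_add fun ε hε => ?_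
    obtain ⟨w, hw, hwu⟩ := hsmallu ε hε
    have hosc' : |u z - u w| ≤ 6 * Ar * Z ^ ((1:ℝ)/6) := by
      rcases le_total w z with h | h
      · exact hosc w z hw hz h
      · rw [abs_sub_comm]; exact hosc z w hz hw h
    have habs := abs_sub_abs_le_abs_sub (u z) (u w)
    linarith
  have hfinal2 : |u z| ≤ (6 * Z ^ ((1:ℝ)/6) + (Real.sqrt Z)⁻¹ + 1) * (Ar + Br + Dr) := by
    have hq : (0:ℝ) ≤ Z ^ ((1:ℝ)/6) := Real.rpow_nonneg hZ.le _
    have hs : (0:ℝ) ≤ (Real.sqrt Z)⁻¹ := by positivity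
    nlinarith [hfinal, hAr0, hBr0, hDr0, mul_nonneg hq hBr0, mul_nonneg hq hDr0,
      mul_nonneg hs hAr0, mul_nonneg hs hBr0, mul_nonneg hq hAr0, mul_nonneg hs hDr0]
  calc (‖u z‖₊ : ENNReal) = ENNReal.ofReal |u z| := Real.enorm_eq_ofReal_abs _
    _ ≤ ENNReal.ofReal ((6 * Z ^ ((1:ℝ)/6) + (Real.sqrt Z)⁻¹ + 1) * (Ar + Br + Dr)) :=
        ENNReal.ofReal_le_ofReal hfinal2
    _ = ENNReal.ofReal (6 * Z ^ ((1:ℝ)/6) + (Real.sqrt Z)⁻¹ + 1)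
          * (IA ^ ((1:ℝ)/2) + IB ^ ((1:ℝ)/2) + ID ^ ((1:ℝ)/2)) := by
        rw [ENNReal.ofReal_mul hCpos.le, ENNReal.ofReal_add (add_nonneg hAr0 hBr0) hDr0,
          ENNReal.ofReal_add hAr0 hBr0, hAr, hBr, hDr]
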